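/- Let 0 < γ < 1 and let φ : [0,∞) → ℝ be continuously differentiable with φ and φ′ of exponential order a, and let v > 0 with v^α > max(a,0). Then the Sadik transform of the Caputo fractional derivative of order γ satisfies S[^cD^γ φ](v,α,β) = v^{γα} S[φ](v,α,β) − v^{(γ−1)α−β} φ(0). -/

import Mathlib

open Real MeasureTheory

open Set Filter
open scoped Convolution
set_option maxHeartbeats 1000000

lemma aux_integrableOn_exp_mul {s a : ℝ} (has : a < s) {f : ℝ → ℝ} (hf : Continuous f)
    (hb : ∃ K > 0, ∀ t ≥ 0, |f t| ≤ K * Real.exp (a * t)) :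
    IntegrableOn (fun t => Real.exp (-s * t) * f t) (Set.Ioi 0) := by
  obtain ⟨K, hK, hbd⟩ := hb
  have hint : IntegrableOn (fun t => K * Real.exp (-(s - a) * t)) (Set.Ioi 0) :=
    (exp_neg_integrableOn_Ioi 0 (by linarith)).const_mul K
  refine hint.mono' ?_ ?_
  · exact ((Real.continuous_exp.comp (continuous_const.mul continuous_id)).mul hf).aestronglyMeasurable
  · filter_upwards [ae_restrict_mem measurableSet_Ioi] with t ht
    have h1 : |f t| ≤ K * Real.exp (a * t) := hbd t (le_of_lt ht)
    have : ‖Real.exp (-s * t) * f t‖ = Real.exp (-s * t) * |f t| := by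
      rw [norm_mul, Real.norm_eq_abs, Real.norm_eq_abs, Real.abs_exp]
    rw [this]
    calc Real.exp (-s * t) * |f t| ≤ Real.exp (-s * t) * (K * Real.exp (a * t)) := by
          exact mul_le_mul_of_nonneg_left h1 (Real.exp_pos _).le
      _ = K * (Real.exp (-s * t) * Real.exp (a * t)) := by ring
      _ = K * Real.exp (-(s - a) * t) := by rw [← Real.exp_add]; ring_nf

lemma aux_tendsto_exp_mul {s a : ℝ} (has : a < s) {f : ℝ → ℝ}
    (hb : ∃ K > 0, ∀ t ≥ 0, |f t| ≤ K * Real.exp (a * t)) :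
    Tendsto (fun t => Real.exp (-s * t) * f t) atTop (nhds 0) := by
  obtain ⟨K, hK, hbd⟩ := hb
  have hg : Tendsto (fun t : ℝ => K * Real.exp (-(s - a) * t)) atTop (nhds 0) := by
    have h1 : Tendsto (fun t : ℝ => (s - a) * t) atTop atTop :=
      Tendsto.const_mul_atTop (by linarith) tendsto_id
    have h3 : Tendsto (fun t : ℝ => K * Real.exp (-((s - a) * t))) atTop (nhds (K * 0)) :=
      (Real.tendsto_exp_neg_atTop_nhds_zero.comp h1).const_mul K
    rw [mul_zero] at h3
    exact h3.congr (fun t => by rw [neg_mul])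
  refine squeeze_zero_norm' ?_ hg
  filter_upwards [eventually_ge_atTop (0:ℝ)] with t ht
  have h1 : |f t| ≤ K * Real.exp (a * t) := hbd t ht
  have : ‖Real.exp (-s * t) * f t‖ = Real.exp (-s * t) * |f t| := by
    rw [norm_mul, Real.norm_eq_abs, Real.norm_eq_abs, Real.abs_exp]
  rw [this]
  calc Real.exp (-s * t) * |f t| ≤ Real.exp (-s * t) * (K * Real.exp (a * t)) :=
        mul_le_mul_of_nonneg_left h1 (Real.exp_pos _).le
    _ = K * (Real.exp (-s * t) * Real.exp (a * t)) := by ring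
    _ = K * Real.exp (-(s - a) * t) := by rw [← Real.exp_add]; ring_nf

lemma aux_laplace_deriv {s a : ℝ} (has : a < s) {φ : ℝ → ℝ} (hφ : ContDiff ℝ 1 φ)
    (hb : ∃ K > 0, ∀ t ≥ 0, |φ t| ≤ K * Real.exp (a * t))
    (hb' : ∃ K > 0, ∀ t ≥ 0, |deriv φ t| ≤ K * Real.exp (a * t)) :
    ∫ t in Set.Ioi (0:ℝ), Real.exp (-s * t) * deriv φ t
      = s * (∫ t in Set.Ioi (0:ℝ), Real.exp (-s * t) * φ t) - φ 0 := by
  have hφc : Continuous φ := hφ.continuous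
  have hφ'c : Continuous (deriv φ) := hφ.continuous_deriv le_rfl
  have hIφ := aux_integrableOn_exp_mul has hφc hb
  have hIφ' := aux_integrableOn_exp_mul has hφ'c hb'
  have hderiv : ∀ t ∈ Set.Ici (0:ℝ), HasDerivAt (fun t => Real.exp (-s * t) * φ t)
      (-s * (Real.exp (-s * t) * φ t) + Real.exp (-s * t) * deriv φ t) t := by
    intro t _
    have h1 : HasDerivAt (fun x : ℝ => Real.exp (-s * x)) (Real.exp (-s * t) * (-s * 1)) t :=
      ((hasDerivAt_id t).const_mul (-s)).exp
    have h2 : HasDerivAt φ (deriv φ t) t := (hφ.differentiable one_ne_zero t).hasDerivAt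
    have : HasDerivAt (fun x => Real.exp (-s * x) * φ x)
        (Real.exp (-s * t) * (-s * 1) * φ t + Real.exp (-s * t) * deriv φ t) t := h1.mul h2
    convert this using 1
    ring
  have hint : IntegrableOn (fun t => -s * (Real.exp (-s * t) * φ t)
      + Real.exp (-s * t) * deriv φ t) (Set.Ioi 0) := (hIφ.const_mul (-s)).add hIφ'
  have htend : Tendsto (fun t => Real.exp (-s * t) * φ t) atTop (nhds 0) :=
    aux_tendsto_exp_mul has hb
  have key := integral_Ioi_of_hasDerivAt_of_tendsto' hderiv hint htend
  rw [integral_add (hIφ.const_mul (-s)) hIφ', integral_const_mul, neg_mul] at key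
  simp only [mul_zero, neg_zero, Real.exp_zero, one_mul] at key
  have key2 : -(s * ∫ t in Set.Ioi (0:ℝ), Real.exp (-s * t) * φ t)
      + (∫ t in Set.Ioi (0:ℝ), Real.exp (-s * t) * deriv φ t) = 0 - φ 0 := key
  have key3 : (∫ t in Set.Ioi (0:ℝ), Real.exp (-s * t) * deriv φ t)
      = s * (∫ t in Set.Ioi (0:ℝ), Real.exp (-s * t) * φ t) - φ 0 :=
    calc (∫ t in Set.Ioi (0:ℝ), Real.exp (-s * t) * deriv φ t)
      = (-(s * ∫ t in Set.Ioi (0:ℝ), Real.exp (-s * t) * φ t)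
          + ∫ t in Set.Ioi (0:ℝ), Real.exp (-s * t) * deriv φ t)
        + s * ∫ t in Set.Ioi (0:ℝ), Real.exp (-s * t) * φ t := by ring
    _ = (0 - φ 0) + s * ∫ t in Set.Ioi (0:ℝ), Real.exp (-s * t) * φ t := by rw [key2]
    _ = s * (∫ t in Set.Ioi (0:ℝ), Real.exp (-s * t) * φ t) - φ 0 := by ring
  exact key3

lemma aux_gamma_int {s γ : ℝ} (hs : 0 < s) (hγ : γ < 1) :
    ∫ u in Set.Ioi (0:ℝ), Real.exp (-s * u) * u ^ (-γ) = Real.Gamma (1-γ) * s ^ (γ-1) := by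
  have h := Real.integral_rpow_mul_exp_neg_mul_Ioi (a := 1-γ) (r := s) (by linarith) hs
  have h2 : ∫ u in Set.Ioi (0:ℝ), Real.exp (-s * u) * u ^ (-γ)
      = ∫ t in Set.Ioi (0:ℝ), t ^ ((1-γ) - 1) * Real.exp (-(s * t)) := by
    refine setIntegral_congr_fun measurableSet_Ioi (fun t ht => ?_)
    rw [neg_mul]
    ring_nf
  rw [h2, h]
  rw [one_div, Real.inv_rpow hs.le, ← Real.rpow_neg hs.le]
  ring_nf

lemma aux_gamma_integrable {s γ : ℝ} (hs : 0 < s) (hγ0 : 0 < γ) (hγ : γ < 1) :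
    IntegrableOn (fun u => Real.exp (-s * u) * u ^ (-γ)) (Set.Ioi (0:ℝ)) := by
  have h0 : IntegrableOn (fun x : ℝ => Real.exp (-x) * x ^ ((1-γ) - 1)) (Set.Ioi (0:ℝ)) :=
    Real.GammaIntegral_convergent (by linarith)
  have h1 : IntegrableOn (fun x : ℝ => Real.exp (-(s*x)) * (s*x) ^ ((1-γ) - 1)) (Set.Ioi (0:ℝ)) := by
    have := (integrableOn_Ioi_comp_mul_left_iff
      (fun x : ℝ => Real.exp (-x) * x ^ ((1-γ) - 1)) 0 hs).2 (by simpa using h0)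
    simpa using this
  have h2 : IntegrableOn (fun x : ℝ => s ^ γ * (Real.exp (-(s*x)) * (s*x) ^ ((1-γ) - 1))) (Set.Ioi (0:ℝ)) := h1.const_mul (s ^ γ)
  refine h2.congr_fun (fun x hx => ?_) measurableSet_Ioi
  have hx0 : (0:ℝ) < x := hx
  have : (s * x) ^ ((1-γ) - 1) = s ^ (-γ) * x ^ (-γ) := by
    rw [show (1-γ) - 1 = -γ by ring, Real.mul_rpow hs.le hx0.le]
  beta_reduce
  rw [this]
  have hss : s ^ γ * s ^ (-γ) = 1 := by
    rw [← Real.rpow_add hs]; simp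
  rw [neg_mul]
  calc s ^ γ * (Real.exp (-(s * x)) * (s ^ (-γ) * x ^ (-γ)))
      = (s ^ γ * s ^ (-γ)) * (Real.exp (-(s * x)) * x ^ (-γ)) := by ring
    _ = Real.exp (-(s * x)) * x ^ (-γ) := by rw [hss, one_mul]

lemma aux_conv {s a γ : ℝ} (has : a < s) (hs : 0 < s) (hγ0 : 0 < γ) (hγ1 : γ < 1)
    {φ : ℝ → ℝ} (hφ : ContDiff ℝ 1 φ)
    (hb' : ∃ K > 0, ∀ t ≥ 0, |deriv φ t| ≤ K * Real.exp (a * t)) :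
    (∫ t in Set.Ioi (0:ℝ), Real.exp (-s * t) * ∫ τ in (0:ℝ)..t, (t - τ) ^ (-γ) * deriv φ τ)
      = (∫ u in Set.Ioi (0:ℝ), Real.exp (-s * u) * u ^ (-γ))
        * (∫ τ in Set.Ioi (0:ℝ), Real.exp (-s * τ) * deriv φ τ) := by
  have hφ'c : Continuous (deriv φ) := hφ.continuous_deriv le_rfl
  set F : ℝ → ℝ := Set.indicator (Set.Ioi 0) (fun u => Real.exp (-s * u) * u ^ (-γ)) with hF
  set G : ℝ → ℝ := Set.indicator (Set.Ioi 0) (fun τ => Real.exp (-s * τ) * deriv φ τ) with hG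
  have hFi : Integrable F := (integrable_indicator_iff measurableSet_Ioi).2
    (aux_gamma_integrable hs hγ0 hγ1)
  have hGi : Integrable G := (integrable_indicator_iff measurableSet_Ioi).2
    (aux_integrableOn_exp_mul has hφ'c hb')
  have hconv := integral_convolution (L := ContinuousLinearMap.mul ℝ ℝ) hFi hGi
  simp only [ContinuousLinearMap.mul_apply'] at hconv
  have hpt : ∀ t ∈ Set.Ioi (0:ℝ),
      (F ⋆[ContinuousLinearMap.mul ℝ ℝ] G) t
        = Real.exp (-s * t) * ∫ τ in (0:ℝ)..t, (t - τ) ^ (-γ) * deriv φ τ := by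
    intro t ht
    have ht' : (0:ℝ) < t := ht
    have hind : (fun u => F u * G (t - u))
        = Set.indicator (Set.Ioo 0 t)
            (fun u => Real.exp (-s * t) * (u ^ (-γ) * deriv φ (t - u))) := by
      funext u
      by_cases h1 : u ∈ Set.Ioo 0 t
      · rw [Set.indicator_of_mem h1, hF, hG, Set.indicator_of_mem (Set.mem_Ioi.2 h1.1),
          Set.indicator_of_mem (Set.mem_Ioi.2 (sub_pos.2 h1.2))]
        calc Real.exp (-s * u) * u ^ (-γ) * (Real.exp (-s * (t - u)) * deriv φ (t - u))
            = Real.exp (-s * u) * Real.exp (-s * (t - u)) * (u ^ (-γ) * deriv φ (t - u)) := by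
              ring
          _ = Real.exp (-s * t) * (u ^ (-γ) * deriv φ (t - u)) := by
              rw [← Real.exp_add]; congr 1; ring
      · rw [Set.indicator_of_notMem h1]
        rw [Set.mem_Ioo, not_and_or] at h1
        rcases h1 with h1 | h1
        · have hFu : F u = 0 := Set.indicator_of_notMem (by simpa using h1) _
          rw [hFu, zero_mul]
        · have hGu : G (t - u) = 0 := by
            refine Set.indicator_of_notMem ?_ _
            simp only [Set.mem_Ioi, not_lt, sub_nonpos]
            linarith [not_lt.1 h1]
          rw [hGu, mul_zero]
    have hcd : (F ⋆[ContinuousLinearMap.mul ℝ ℝ] G) t = ∫ u, F u * G (t - u) := by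
      simp [convolution_def, ContinuousLinearMap.mul_apply']
    rw [hcd, hind, integral_indicator measurableSet_Ioo, integral_const_mul]
    congr 1
    rw [← integral_Ioc_eq_integral_Ioo, ← intervalIntegral.integral_of_le ht'.le]
    have hcs := intervalIntegral.integral_comp_sub_left (a := 0) (b := t)
      (fun u => u ^ (-γ) * deriv φ (t - u)) t
    simp only [sub_self, sub_zero] at hcs
    rw [← hcs]
    refine intervalIntegral.integral_congr (fun τ _ => ?_)
    simp [sub_sub_cancel]
  have hvanish : ∀ x : ℝ, x ∉ Set.Ioi (0:ℝ) → (F ⋆[ContinuousLinearMap.mul ℝ ℝ] G) x = 0 := by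
    intro x hx
    have hx0 : x ≤ 0 := by simpa using hx
    have hzero : ∀ u : ℝ, F u * G (x - u) = 0 := by
      intro u
      by_cases hu : 0 < u
      · have hGu : G (x - u) = 0 := by
          refine Set.indicator_of_notMem ?_ _
          simp only [Set.mem_Ioi, not_lt, sub_nonpos]
          linarith
        rw [hGu, mul_zero]
      · have hFu : F u = 0 := Set.indicator_of_notMem (by simpa using hu) _
        rw [hFu, zero_mul]
    have hcd : (F ⋆[ContinuousLinearMap.mul ℝ ℝ] G) x = ∫ u, F u * G (x - u) := by
      simp [convolution_def, ContinuousLinearMap.mul_apply']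
    rw [hcd]
    simp [hzero]
  calc (∫ t in Set.Ioi (0:ℝ), Real.exp (-s * t) * ∫ τ in (0:ℝ)..t, (t - τ) ^ (-γ) * deriv φ τ)
      = ∫ t in Set.Ioi (0:ℝ), (F ⋆[ContinuousLinearMap.mul ℝ ℝ] G) t :=
        setIntegral_congr_fun measurableSet_Ioi (fun t ht => (hpt t ht).symm)
    _ = ∫ t, (F ⋆[ContinuousLinearMap.mul ℝ ℝ] G) t :=
        setIntegral_eq_integral_of_forall_compl_eq_zero hvanish
    _ = (∫ u, F u) * (∫ τ, G τ) := hconv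
    _ = (∫ u in Set.Ioi (0:ℝ), Real.exp (-s * u) * u ^ (-γ))
        * (∫ τ in Set.Ioi (0:ℝ), Real.exp (-s * τ) * deriv φ τ) := by
      rw [hF, hG, integral_indicator measurableSet_Ioi, integral_indicator measurableSet_Ioi]

/-- Sadik transform of the Caputo derivative of order `γ ∈ (0,1)`:
`S[ᶜD^γ φ] = v^{γα} S[φ] - v^{(γ-1)α-β} φ(0)`. -/
theorem sadik_transform_caputo (γ : ℝ) (hγ₀ : 0 < γ) (hγ₁ : γ < 1)
    (φ : ℝ → ℝ) (a α β v : ℝ) (hφ : ContDiff ℝ 1 φ)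
    (hbound : ∃ K > 0, ∀ t ≥ 0, |φ t| ≤ K * Real.exp (a * t))
    (hbound' : ∃ K > 0, ∀ t ≥ 0, |deriv φ t| ≤ K * Real.exp (a * t))
    (hα : α ≠ 0) (hv : 0 < v) (hva : max a 0 < v ^ α) :
    v ^ (-β) * ∫ t in Set.Ioi (0:ℝ),
        Real.exp (-t * v ^ α) *
          ((1 / Real.Gamma (1 - γ)) *
            ∫ τ in (0:ℝ)..t, (t - τ) ^ (-γ) * deriv φ τ) =
      v ^ (γ * α) *
          (v ^ (-β) * ∫ t in Set.Ioi (0:ℝ), Real.exp (-t * v ^ α) * φ t)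
        - v ^ ((γ - 1) * α - β) * φ 0 := by
  have h1γ : (0:ℝ) < 1 - γ := by linarith
  have hΓ : 0 < Real.Gamma (1 - γ) := Real.Gamma_pos_of_pos h1γ
  set s := v ^ α with hsdef
  have hs : 0 < s := lt_of_le_of_lt (le_max_right a 0) hva
  have has : a < s := lt_of_le_of_lt (le_max_left a 0) hva
  have hexp : ∀ t : ℝ, -t * s = -s * t := fun t => by ring
  simp only [hexp]
  have hpull : (∫ t in Set.Ioi (0:ℝ), Real.exp (-s * t) *
        ((1 / Real.Gamma (1 - γ)) * ∫ τ in (0:ℝ)..t, (t - τ) ^ (-γ) * deriv φ τ))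
      = (1 / Real.Gamma (1 - γ)) * ∫ t in Set.Ioi (0:ℝ),
          Real.exp (-s * t) * ∫ τ in (0:ℝ)..t, (t - τ) ^ (-γ) * deriv φ τ := by
    rw [← integral_const_mul]
    exact setIntegral_congr_fun measurableSet_Ioi (fun t _ => by ring)
  rw [hpull, aux_conv has hs hγ₀ hγ₁ hφ hbound', aux_gamma_int hs hγ₁,
      aux_laplace_deriv has hφ hbound hbound']
  set Φ := ∫ t in Set.Ioi (0:ℝ), Real.exp (-s * t) * φ t with hΦ
  have hA : s ^ (γ - 1) = v ^ (α * (γ - 1)) := by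
    rw [hsdef, ← Real.rpow_mul hv.le]
  have hB : v ^ (α * (γ - 1)) * s = v ^ (γ * α) := by
    rw [hsdef, ← Real.rpow_add hv]; congr 1; ring
  have hC : v ^ (-β) * v ^ (α * (γ - 1)) = v ^ ((γ - 1) * α - β) := by
    rw [← Real.rpow_add hv]; congr 1; ring
  calc v ^ (-β) * (1 / Real.Gamma (1 - γ) *
          (Real.Gamma (1 - γ) * s ^ (γ - 1) * (s * Φ - φ 0)))
      = v ^ (-β) * (s ^ (γ - 1) * (s * Φ - φ 0)) := by
        field_simp
    _ = (v ^ (α * (γ - 1)) * s) * (v ^ (-β) * Φ)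
        - (v ^ (-β) * v ^ (α * (γ - 1))) * φ 0 := by rw [hA]; ring
    _ = v ^ (γ * α) * (v ^ (-β) * Φ) - v ^ ((γ - 1) * α - β) * φ 0 := by rw [hB, hC]
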